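/- Let d ∈ ℕ, c = (c_1,…,c_d) ∈ [0,∞)^d, let ũ ∈ ℝ^d have all coordinates strictly positive, let μ_1,…,μ_d be Borel measures on U_d := [0,∞)^d∖{0} with ∫_{U_d}‖z‖² μ_ℓ(dz) < ∞ for each ℓ, let v ∈ ℂ^d, and let λ ∈ ℂ, s ∈ ℝ satisfy s > 0, Re(λ) ≤ s/2 and Im(λ) ≠ 0. Define C_{v,ℓ} := 2|⟨v,e_ℓ⟩|²c_ℓ + ∫_{U_d}|⟨v,z⟩|² μ_ℓ(dz) and C̃_{v,ℓ} := 2⟨v,e_ℓ⟩²c_ℓ + ∫_{U_d}⟨v,z⟩² μ_ℓ(dz), and let Σ_v be the 2×2 real matrix given by Σ_v := (1/2)Σ_{ℓ=1}^d ũ_ℓ C_{v,ℓ} I_2 if Re(λ) = s/2 (the Im(λ)=0 correction term vanishes since Im(λ) ≠ 0), and Σ_v := (1/2)Σ_{ℓ=1}^d ũ_ℓ (C_{v,ℓ}/(s−2Re(λ)) I_2 + [[Re(C̃_{v,ℓ}/(s−2λ)), Im(C̃_{v,ℓ}/(s−2λ))],[Im(C̃_{v,ℓ}/(s−2λ)),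 −Re(C̃_{v,ℓ}/(s−2λ))]]) if Re(λ) < s/2. Then Σ_v is invertible if and only if there exists ℓ ∈ {1,…,d} such that c_ℓ⟨v,e_ℓ⟩ ≠ 0 or μ_ℓ({z ∈ U_d : ⟨v,z⟩ ≠ 0}) > 0; moreover, in that case Σ_v is strictly positive definite. -/

import Mathlib

open MeasureTheory
open scoped ENNReal

/-- The pairing `⟨v,z⟩ = ∑ j, v j * z j` of `v ∈ ℂ^d` with `z ∈ ℝ^d`. -/
noncomputable def pairCV {d : ℕ} (v : Fin d → ℂ) (z : Fin d → ℝ) : ℂ :=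
  ∑ j, v j * (z j : ℂ)

/-- `C_{v,ℓ} = 2|⟨v,e_ℓ⟩|² c_ℓ + ∫ |⟨v,z⟩|² dμ_ℓ`. -/
noncomputable def Cvl {d : ℕ} (c : Fin d → ℝ) (μ : Fin d → Measure (Fin d → ℝ))
    (v : Fin d → ℂ) (ℓ : Fin d) : ℝ :=
  2 * ‖v ℓ‖ ^ 2 * c ℓ + ∫ z, ‖pairCV v z‖ ^ 2 ∂(μ ℓ)

/-- `C̃_{v,ℓ} = 2⟨v,e_ℓ⟩² c_ℓ + ∫ ⟨v,z⟩² dμ_ℓ`. -/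
noncomputable def Ctvl {d : ℕ} (c : Fin d → ℝ) (μ : Fin d → Measure (Fin d → ℝ))
    (v : Fin d → ℂ) (ℓ : Fin d) : ℂ :=
  2 * (v ℓ) ^ 2 * (c ℓ : ℂ) + ∫ z, (pairCV v z) ^ 2 ∂(μ ℓ)

lemma continuous_pairCV {d : ℕ} (v : Fin d → ℂ) :
    Continuous fun z : Fin d → ℝ => pairCV v z := by
  unfold pairCV
  exact continuous_finset_sum _ fun j _ =>
    continuous_const.mul (Complex.continuous_ofReal.comp (continuous_apply j))

lemma abs_pairCV_le {d : ℕ} (v : Fin d → ℂ) (z : Fin d → ℝ) :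
    ‖pairCV v z‖ ≤ (∑ j, ‖v j‖) * ‖z‖ := by
  unfold pairCV
  refine le_trans (norm_sum_le _ _) ?_
  rw [Finset.sum_mul]
  refine Finset.sum_le_sum fun j _ => ?_
  rw [norm_mul, Complex.norm_real, Real.norm_eq_abs]
  have : |z j| ≤ ‖z‖ := by
    simpa [Real.norm_eq_abs] using norm_le_pi_norm z j
  exact mul_le_mul_of_nonneg_left this (norm_nonneg _)

lemma integrable_norm_sq {d : ℕ} (ν : Measure (Fin d → ℝ))
    (hmom : ∫⁻ z, (‖z‖₊ : ℝ≥0∞) ^ 2 ∂ν < ⊤) :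
    Integrable (fun z : Fin d → ℝ => ‖z‖ ^ 2) ν := by
  refine ⟨(continuous_norm.pow 2).aestronglyMeasurable, ?_⟩
  simpa [HasFiniteIntegral, enorm_pow, enorm_norm, enorm_eq_nnnorm] using hmom

set_option maxHeartbeats 1000000 in

lemma integrable_abs_pair_sq {d : ℕ} (ν : Measure (Fin d → ℝ))
    (hmom : ∫⁻ z, (‖z‖₊ : ℝ≥0∞) ^ 2 ∂ν < ⊤) (v : Fin d → ℂ) :
    Integrable (fun z => ‖pairCV v z‖ ^ 2) ν := by
  have hg : Integrable (fun z : Fin d → ℝ => (∑ j, ‖v j‖) ^ 2 * ‖z‖ ^ 2) ν :=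
    (integrable_norm_sq ν hmom).const_mul _
  refine Integrable.mono' hg
    ((((continuous_pairCV v).norm).pow 2).aestronglyMeasurable)
    (Filter.Eventually.of_forall fun z => ?_)
  have h1 := abs_pairCV_le v z
  have h0 : (0:ℝ) ≤ ‖pairCV v z‖ := norm_nonneg _
  rw [Real.norm_eq_abs, abs_of_nonneg (by positivity)]
  calc ‖pairCV v z‖ ^ 2 ≤ ((∑ j, ‖v j‖) * ‖z‖) ^ 2 :=
        pow_le_pow_left₀ h0 h1 2
    _ = (∑ j, ‖v j‖) ^ 2 * ‖z‖ ^ 2 := by ring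

set_option maxHeartbeats 1000000 in

lemma integrable_pair_sq {d : ℕ} (ν : Measure (Fin d → ℝ))
    (hmom : ∫⁻ z, (‖z‖₊ : ℝ≥0∞) ^ 2 ∂ν < ⊤) (v : Fin d → ℂ) :
    Integrable (fun z => (pairCV v z) ^ 2) ν := by
  refine Integrable.mono' (integrable_abs_pair_sq ν hmom v)
    (((continuous_pairCV v).pow 2).aestronglyMeasurable)
    (Filter.Eventually.of_forall fun z => ?_)
  simp [norm_pow]

lemma Cvl_nonneg {d : ℕ} (c : Fin d → ℝ) (hc : ∀ i, 0 ≤ c i)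
    (μ : Fin d → Measure (Fin d → ℝ)) (v : Fin d → ℂ) (ℓ : Fin d) :
    0 ≤ Cvl c μ v ℓ := by
  unfold Cvl
  have h1 : 0 ≤ ∫ z, ‖pairCV v z‖ ^ 2 ∂(μ ℓ) :=
    integral_nonneg fun z => by positivity
  have h2 : (0:ℝ) ≤ 2 * ‖v ℓ‖ ^ 2 * c ℓ := by
    have := hc ℓ; positivity
  linarith

lemma abs_Ctvl_le {d : ℕ} (c : Fin d → ℝ) (hc : ∀ i, 0 ≤ c i)
    (μ : Fin d → Measure (Fin d → ℝ)) (v : Fin d → ℂ) (ℓ : Fin d) :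
    ‖Ctvl c μ v ℓ‖ ≤ Cvl c μ v ℓ := by
  unfold Ctvl Cvl
  refine le_trans (norm_add_le _ _) (add_le_add ?_ ?_)
  · rw [norm_mul, norm_mul, Complex.norm_real, Real.norm_of_nonneg (hc ℓ), norm_pow]
    simp
  · refine le_trans (norm_integral_le_integral_norm _) (le_of_eq ?_)
    congr 1; ext z
    simp [norm_pow]

lemma Cvl_pos_iff {d : ℕ} (c : Fin d → ℝ) (hc : ∀ i, 0 ≤ c i)
    (μ : Fin d → Measure (Fin d → ℝ))
    (hsupp : ∀ ℓ, μ ℓ {z | ¬ ((∀ i, 0 ≤ z i) ∧ z ≠ 0)} = 0)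
    (hmom : ∀ ℓ, ∫⁻ z, (‖z‖₊ : ℝ≥0∞) ^ 2 ∂(μ ℓ) < ⊤)
    (v : Fin d → ℂ) (ℓ : Fin d) :
    0 < Cvl c μ v ℓ ↔ ((c ℓ : ℂ) * v ℓ ≠ 0 ∨
      0 < μ ℓ {z | ((∀ i, 0 ≤ z i) ∧ z ≠ 0) ∧ pairCV v z ≠ 0}) := by
  have h1 : 0 ≤ ∫ z, ‖pairCV v z‖ ^ 2 ∂(μ ℓ) :=
    integral_nonneg fun z => by positivity
  have h2 : (0:ℝ) ≤ 2 * ‖v ℓ‖ ^ 2 * c ℓ := by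
    have := hc ℓ; positivity
  have hμeq : μ ℓ {z | ((∀ i, 0 ≤ z i) ∧ z ≠ 0) ∧ pairCV v z ≠ 0}
      = μ ℓ {z | pairCV v z ≠ 0} := by
    refine le_antisymm (measure_mono fun z hz => hz.2) ?_
    calc μ ℓ {z | pairCV v z ≠ 0}
        ≤ μ ℓ ({z | ((∀ i, 0 ≤ z i) ∧ z ≠ 0) ∧ pairCV v z ≠ 0}
            ∪ {z | ¬ ((∀ i, 0 ≤ z i) ∧ z ≠ 0)}) := by
          refine measure_mono fun z hz => ?_
          by_cases h : (∀ i, 0 ≤ z i) ∧ z ≠ 0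
          · exact Or.inl ⟨h, hz⟩
          · exact Or.inr h
      _ ≤ _ + _ := measure_union_le _ _
      _ = μ ℓ {z | ((∀ i, 0 ≤ z i) ∧ z ≠ 0) ∧ pairCV v z ≠ 0} := by
          rw [hsupp ℓ, add_zero]
  have hint : (0 < ∫ z, ‖pairCV v z‖ ^ 2 ∂(μ ℓ)) ↔
      0 < μ ℓ {z | pairCV v z ≠ 0} := by
    rw [integral_pos_iff_support_of_nonneg (fun z => by positivity)
      (integrable_abs_pair_sq (μ ℓ) (hmom ℓ) v)]
    have : (Function.support fun z => ‖pairCV v z‖ ^ 2)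
        = {z | pairCV v z ≠ 0} := by
      ext z; simp [Function.support]
    rw [this]
  constructor
  · intro hpos
    unfold Cvl at hpos
    rcases lt_or_eq_of_le h2 with h | h
    · left
      intro hcv
      rcases mul_eq_zero.1 hcv with h0 | h0
      · exact absurd (by exact_mod_cast h0 : c ℓ = 0) (by intro h0; rw [h0] at h; simp at h)
      · rw [h0] at h; simp at h
    · right
      rw [hμeq]
      exact hint.1 (by rw [← h] at hpos; linarith)
  · intro hor
    rcases hor with h | h
    · have hcne : c ℓ ≠ 0 := fun h0 => h (by simp [h0])
      have hvne : v ℓ ≠ 0 := fun h0 => h (by simp [h0])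
      have : 0 < 2 * ‖v ℓ‖ ^ 2 * c ℓ := by
        have := (hc ℓ).lt_of_ne (Ne.symm hcne)
        have hv : 0 < ‖v ℓ‖ := norm_pos_iff.2 hvne
        positivity
      unfold Cvl; linarith
    · rw [hμeq] at h
      have := hint.2 h
      unfold Cvl; linarith

lemma posdef_2x2 (P Q R : ℝ) (hP : 0 < P) (h : Q ^ 2 + R ^ 2 < P ^ 2) :
    (!![P + Q, R; R, P - Q] : Matrix (Fin 2) (Fin 2) ℝ).PosDef := by
  rw [Matrix.posDef_iff_dotProduct_mulVec]
  constructor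
  · ext i j
    fin_cases i <;> fin_cases j <;> simp [Matrix.conjTranspose_apply]
  · intro x hx
    have hx' : x 0 ≠ 0 ∨ x 1 ≠ 0 := by
      by_contra hcon
      push_neg at hcon
      exact hx (funext fun i => by fin_cases i <;> simp [hcon.1, hcon.2])
    have hPQ : 0 < P + Q := by nlinarith
    have hgoal : 0 < (P + Q) * x 0 ^ 2 + 2 * R * (x 0 * x 1) + (P - Q) * x 1 ^ 2 := by
      by_cases h1 : x 1 = 0
      · have h0 : x 0 ≠ 0 := by rcases hx' with h | h; exact h; exact absurd h1 h
        have hx0 : 0 < x 0 ^ 2 :=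
          lt_of_le_of_ne (sq_nonneg _) (Ne.symm (pow_ne_zero 2 h0))
        rw [h1]
        nlinarith [mul_pos hPQ hx0]
      · have hx1 : 0 < x 1 ^ 2 :=
          lt_of_le_of_ne (sq_nonneg _) (Ne.symm (pow_ne_zero 2 h1))
        have hdet : 0 < P ^ 2 - Q ^ 2 - R ^ 2 := by linarith
        nlinarith [sq_nonneg ((P + Q) * x 0 + R * x 1), mul_pos hdet hx1]
    simp only [dotProduct, Matrix.mulVec, Fin.sum_univ_two, Pi.star_apply, star_trivial]
    simp [dotProduct, Fin.sum_univ_two]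
    nlinarith [hgoal]

/-- The asymptotic covariance matrix `Σ_v`: for `Re λ = s/2` it is
`(1/2) ∑ ℓ ũ_ℓ (C_{v,ℓ} I₂ + [[Re C̃, Im C̃],[Im C̃, -Re C̃]] 1_{Im λ = 0})`, and for
`Re λ < s/2` (more generally, `Re λ ≠ s/2`) it is
`(1/2) ∑ ℓ ũ_ℓ (C_{v,ℓ}/(s-2Reλ) I₂ + [[Re(C̃/(s-2λ)), Im(C̃/(s-2λ))],[Im(C̃/(s-2λ)), -Re(C̃/(s-2λ))]])`. -/
noncomputable def SigmaV {d : ℕ} (c : Fin d → ℝ) (utld : Fin d → ℝ)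
    (μ : Fin d → Measure (Fin d → ℝ)) (v : Fin d → ℂ) (lam : ℂ) (s : ℝ) :
    Matrix (Fin 2) (Fin 2) ℝ :=
  if lam.re = s / 2 then
    (1 / 2 : ℝ) • ∑ ℓ, utld ℓ •
      (Cvl c μ v ℓ • (1 : Matrix (Fin 2) (Fin 2) ℝ) +
        (if lam.im = 0 then
          !![(Ctvl c μ v ℓ).re, (Ctvl c μ v ℓ).im;
             (Ctvl c μ v ℓ).im, -(Ctvl c μ v ℓ).re]
         else 0))
  else
    (1 / 2 : ℝ) • ∑ ℓ, utld ℓ •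
      ((Cvl c μ v ℓ / (s - 2 * lam.re)) • (1 : Matrix (Fin 2) (Fin 2) ℝ) +
        !![(Ctvl c μ v ℓ / ((s : ℂ) - 2 * lam)).re, (Ctvl c μ v ℓ / ((s : ℂ) - 2 * lam)).im;
           (Ctvl c μ v ℓ / ((s : ℂ) - 2 * lam)).im, -(Ctvl c μ v ℓ / ((s : ℂ) - 2 * lam)).re])


/-- Let `c ∈ [0,∞)^d`, `ũ ∈ (0,∞)^d`, let `μ_1, …, μ_d` be Borel measures on
`U_d = [0,∞)^d \ {0}` with finite second moments, `v ∈ ℂ^d`, and `λ ∈ ℂ`, `s > 0` with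
`Re λ ≤ s/2` and `Im λ ≠ 0`. Then `Σ_v` is invertible if and only if there exists `ℓ` such that
`c_ℓ ⟨v,e_ℓ⟩ ≠ 0` or `μ_ℓ {z ∈ U_d : ⟨v,z⟩ ≠ 0} > 0`; moreover, in that case `Σ_v` is strictly
positive definite. -/
theorem stmt7 (d : ℕ) (c : Fin d → ℝ) (hc : ∀ i, 0 ≤ c i)
    (utld : Fin d → ℝ) (hu : ∀ i, 0 < utld i)
    (μ : Fin d → Measure (Fin d → ℝ))
    (hsupp : ∀ ℓ, μ ℓ {z | ¬ ((∀ i, 0 ≤ z i) ∧ z ≠ 0)} = 0)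
    (hmom : ∀ ℓ, ∫⁻ z, (‖z‖₊ : ℝ≥0∞) ^ 2 ∂(μ ℓ) < ⊤)
    (v : Fin d → ℂ) (lam : ℂ) (s : ℝ) (hs : 0 < s) (hlam : lam.re ≤ s / 2)
    (him : lam.im ≠ 0) :
    (IsUnit (SigmaV c utld μ v lam s) ↔
      ∃ ℓ, (c ℓ : ℂ) * v ℓ ≠ 0 ∨
        0 < μ ℓ {z | ((∀ i, 0 ≤ z i) ∧ z ≠ 0) ∧ pairCV v z ≠ 0}) ∧
    ((∃ ℓ, (c ℓ : ℂ) * v ℓ ≠ 0 ∨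
        0 < μ ℓ {z | ((∀ i, 0 ≤ z i) ∧ z ≠ 0) ∧ pairCV v z ≠ 0}) →
      (SigmaV c utld μ v lam s).PosDef) := by
  classical
  set K : ℝ := ∑ ℓ, utld ℓ * Cvl c μ v ℓ with hKdef
  by_cases hcond : ∃ ℓ, (c ℓ : ℂ) * v ℓ ≠ 0 ∨
      0 < μ ℓ {z | ((∀ i, 0 ≤ z i) ∧ z ≠ 0) ∧ pairCV v z ≠ 0}
  · obtain ⟨ℓ0, hℓ0⟩ := hcond
    have hK : 0 < K :=
      Finset.sum_pos' (fun i _ => mul_nonneg (hu i).le (Cvl_nonneg c hc μ v i))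
        ⟨ℓ0, Finset.mem_univ _,
          mul_pos (hu ℓ0) ((Cvl_pos_iff c hc μ hsupp hmom v ℓ0).2 hℓ0)⟩
    have hpd : (SigmaV c utld μ v lam s).PosDef := by
      by_cases hre : lam.re = s / 2
      · have hform : SigmaV c utld μ v lam s = !![K / 2 + 0, 0; 0, K / 2 - 0] := by
          rw [SigmaV, if_pos hre]
          simp only [if_neg him, add_zero]
          rw [Finset.sum_congr rfl fun ℓ _ =>
            (smul_smul (utld ℓ) (Cvl c μ v ℓ) (1 : Matrix (Fin 2) (Fin 2) ℝ)),
            ← Finset.sum_smul, smul_smul]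
          ext i j
          fin_cases i <;> fin_cases j <;> simp [Matrix.one_apply, hKdef] <;> try ring
        rw [hform]
        refine posdef_2x2 _ 0 0 (by positivity) (by norm_num; positivity)
      · have ha : 0 < s - 2 * lam.re := by
          have := lt_of_le_of_ne hlam hre; linarith
        set w : ℂ := (s : ℂ) - 2 * lam with hw
        set b := ‖w‖ with hbdef
        have hb2 : b ^ 2 = (s - 2 * lam.re) ^ 2 + (2 * lam.im) ^ 2 := by
          rw [hbdef, Complex.sq_norm, Complex.normSq_apply, hw]
          simp [Complex.sub_re, Complex.sub_im, Complex.mul_re, Complex.mul_im]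
          ring
        have hab : s - 2 * lam.re < b := by
          have hbn : 0 ≤ b := norm_nonneg w
          nlinarith [mul_self_pos.2 him]
        have hbpos : 0 < b := lt_trans ha hab
        set W : ℂ := ∑ ℓ, (utld ℓ : ℂ) * (Ctvl c μ v ℓ / w) with hWdef
        have habsW : ‖W‖ ≤ K / b := by
          rw [hWdef]
          refine le_trans (norm_sum_le _ _) ?_
          rw [hKdef, Finset.sum_div]
          refine Finset.sum_le_sum fun ℓ _ => ?_
          rw [norm_mul, Complex.norm_real, Real.norm_of_nonneg (hu ℓ).le, norm_div,
            ← hbdef, mul_div_assoc]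
          exact mul_le_mul_of_nonneg_left
            (div_le_div_of_nonneg_right (abs_Ctvl_le c hc μ v ℓ) hbpos.le) (hu ℓ).le
        set q : Fin d → ℝ := fun ℓ => (Ctvl c μ v ℓ / w).re with hqdef
        set r : Fin d → ℝ := fun ℓ => (Ctvl c μ v ℓ / w).im with hrdef
        set PP : ℝ := ∑ ℓ, (1 / 2) * (utld ℓ * (Cvl c μ v ℓ / (s - 2 * lam.re))) with hPPdef
        set QQ : ℝ := ∑ ℓ, (1 / 2) * (utld ℓ * q ℓ) with hQQdef
        set RR : ℝ := ∑ ℓ, (1 / 2) * (utld ℓ * r ℓ) with hRRdef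
        have hform : SigmaV c utld μ v lam s = !![PP + QQ, RR; RR, PP - QQ] := by
          rw [SigmaV, if_neg hre]
          ext i j
          fin_cases i <;> fin_cases j <;>
            · simp only [hPPdef, hQQdef, hRRdef, hqdef, hrdef, ← hw, Matrix.smul_apply,
                Matrix.sum_apply, Matrix.add_apply, Matrix.one_apply, smul_eq_mul,
                Finset.mul_sum, ← Finset.sum_add_distrib, ← Finset.sum_sub_distrib]
              refine Finset.sum_congr rfl fun ℓ _ => ?_
              simp [Matrix.one_apply]
              try ring
        have hWre : W.re = ∑ ℓ, utld ℓ * q ℓ := by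
          rw [hWdef, Complex.re_sum]
          exact Finset.sum_congr rfl fun ℓ _ => Complex.re_ofReal_mul _ _
        have hWim : W.im = ∑ ℓ, utld ℓ * r ℓ := by
          rw [hWdef, Complex.im_sum]
          exact Finset.sum_congr rfl fun ℓ _ => Complex.im_ofReal_mul _ _
        have hQW : QQ = W.re / 2 := by
          rw [hQQdef, hWre, Finset.sum_div]
          exact Finset.sum_congr rfl fun ℓ _ => by ring
        have hRW : RR = W.im / 2 := by
          rw [hRRdef, hWim, Finset.sum_div]
          exact Finset.sum_congr rfl fun ℓ _ => by ring
        have hPP : PP = K / (2 * (s - 2 * lam.re)) := by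
          rw [hPPdef, hKdef, Finset.sum_div]
          exact Finset.sum_congr rfl fun ℓ _ => by field_simp [ha.ne']; try ring
        have hPpos : 0 < PP := by rw [hPP]; positivity
        have hsq : QQ ^ 2 + RR ^ 2 = ‖W‖ ^ 2 / 4 := by
          rw [hQW, hRW, Complex.sq_norm, Complex.normSq_apply]
          ring
        have hQR : QQ ^ 2 + RR ^ 2 < PP ^ 2 := by
          have h1 : K / b < K / (s - 2 * lam.re) :=
            div_lt_div_of_pos_left hK ha hab
          have h2 : ‖W‖ < K / (s - 2 * lam.re) := lt_of_le_of_lt habsW h1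
          have h3 : ‖W‖ ^ 2 < (K / (s - 2 * lam.re)) ^ 2 := by
            nlinarith [norm_nonneg W]
          rw [hsq, hPP]
          have h4 : (K / (2 * (s - 2 * lam.re))) ^ 2 = (K / (s - 2 * lam.re)) ^ 2 / 4 := by
            field_simp [ha.ne']
            ring
          rw [h4]
          linarith
        rw [hform]
        exact posdef_2x2 _ _ _ hPpos hQR
    have hunit : IsUnit (SigmaV c utld μ v lam s) :=
      (Matrix.isUnit_iff_isUnit_det _).2 (isUnit_iff_ne_zero.2 (ne_of_gt hpd.det_pos))
    exact ⟨⟨fun _ => ⟨ℓ0, hℓ0⟩, fun _ => hunit⟩, fun _ => hpd⟩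
  · have hCz : ∀ ℓ, Cvl c μ v ℓ = 0 := fun ℓ =>
      le_antisymm (not_lt.1 fun h => hcond ⟨ℓ, (Cvl_pos_iff c hc μ hsupp hmom v ℓ).1 h⟩)
        (Cvl_nonneg c hc μ v ℓ)
    have hCtz : ∀ ℓ, Ctvl c μ v ℓ = 0 := fun ℓ => by
      have h := abs_Ctvl_le c hc μ v ℓ
      rw [hCz ℓ] at h
      exact norm_eq_zero.1 (le_antisymm h (norm_nonneg _))
    have hzero : SigmaV c utld μ v lam s = 0 := by
      unfold SigmaV
      split <;>
      · ext i j
        fin_cases i <;> fin_cases j <;>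
          simp [hCz, hCtz, him, Matrix.sum_apply, Matrix.one_apply]
    have hnunit : ¬ IsUnit (SigmaV c utld μ v lam s) := by
      rw [hzero]
      intro h
      rw [Matrix.isUnit_iff_isUnit_det, Matrix.det_zero] at h
      simp at h
    exact ⟨⟨fun h => absurd h hnunit, fun h => absurd h hcond⟩, fun h => absurd h hcond⟩
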